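/- Let N ≥ 1, T > 0, and let S_N = {t ∈ ℝ^N : 0 ≤ t_1 ≤ t_2 ≤ ⋯ ≤ t_N ≤ T} be the ordered simplex, with S_{N−1} the corresponding ordered simplex in ℝ^{N−1}. Let p : ℝ^N → ℝ be continuously differentiable and let g : ℝ → ℝ be continuously differentiable. Then ∑_{n=1}^N ∫_{S_N} (∂p/∂t_n)(t)·g(t_n) dt = g(T)·∫_{S_{N−1}} p(s_1,…,s_{N−1},T) ds − g(0)·∫_{S_{N−1}} p(0,s_1,…,s_{N−1}) ds − ∫_{S_N} p(t)·(∑_{n=1}^N g'(t_n)) dt, where for N = 1 the two (N−1)-dimensional integrals are interpreted as p(T) and p(0) respectively (integration over the one-point space ℝ^0 with unit measure). In particular, after coordinatewise integration by parts over the simplex, all interior boundary terms at the facets {t_n = t_{n+1}} cancel in pairs and only the facets {t_1 = 0} and {t_N = T} contribute. -/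

import Mathlib

open MeasureTheory Real Set

/-- The ordered simplex `S_N = {t ∈ ℝ^N : 0 ≤ t 1 ≤ ⋯ ≤ t N ≤ T}`. -/
def ordSimplex (N : ℕ) (T : ℝ) : Set (Fin N → ℝ) :=
  {t | Monotone t ∧ ∀ i, t i ∈ Set.Icc 0 T}

namespace Stmt6

lemma isClosed_ordSimplex (N : ℕ) (T : ℝ) : IsClosed (ordSimplex N T) := by
  have h1 : IsClosed {t : Fin N → ℝ | Monotone t} := by
    have : {t : Fin N → ℝ | Monotone t} =
        ⋂ (i : Fin N) (j : Fin N) (_ : i ≤ j), {t : Fin N → ℝ | t i ≤ t j} := by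
      ext t; simp [Monotone]
    rw [this]
    exact isClosed_iInter fun i => isClosed_iInter fun j => isClosed_iInter fun _ =>
      isClosed_le (continuous_apply i) (continuous_apply j)
  have h2 : IsClosed {t : Fin N → ℝ | ∀ i, t i ∈ Set.Icc 0 T} := by
    have : {t : Fin N → ℝ | ∀ i, t i ∈ Set.Icc 0 T} =
        ⋂ (i : Fin N), (fun t : Fin N → ℝ => t i) ⁻¹' (Set.Icc 0 T) := by
      ext t; simp
    rw [this]
    exact isClosed_iInter fun i => IsClosed.preimage (continuous_apply i) isClosed_Icc
  exact h1.inter h2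

lemma isCompact_ordSimplex (N : ℕ) (T : ℝ) : IsCompact (ordSimplex N T) := by
  have hsub : ordSimplex N T ⊆ Set.pi Set.univ (fun _ : Fin N => Set.Icc (0:ℝ) T) := by
    intro t ht i _
    exact ht.2 i
  exact (isCompact_univ_pi fun _ => isCompact_Icc).of_isClosed_subset
    (isClosed_ordSimplex N T) hsub

lemma measurableSet_ordSimplex (N : ℕ) (T : ℝ) : MeasurableSet (ordSimplex N T) :=
  (isClosed_ordSimplex N T).measurableSet

noncomputable def snocL (N : ℕ) : ((Fin N → ℝ) × ℝ) →L[ℝ] (Fin (N+1) → ℝ) :=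
  ContinuousLinearMap.pi (fun i => Fin.lastCases (ContinuousLinearMap.snd ℝ (Fin N → ℝ) ℝ)
    (fun j => (ContinuousLinearMap.proj j).comp (ContinuousLinearMap.fst ℝ (Fin N → ℝ) ℝ)) i)

lemma snocL_apply (N : ℕ) (s : Fin N → ℝ) (τ : ℝ) : snocL N (s, τ) = Fin.snoc s τ := by
  funext i
  refine Fin.lastCases ?_ ?_ i
  · simp [snocL]
  · intro j; simp [snocL]

lemma measurePreserving_snoc (N : ℕ) :
    MeasurePreserving (fun z : ℝ × (Fin N → ℝ) => (Fin.snoc z.2 z.1 : Fin (N+1) → ℝ))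
      volume volume := by
  have h := (volume_preserving_piFinSuccAbove (fun _ : Fin (N+1) => ℝ) (Fin.last N)).symm
    (MeasurableEquiv.piFinSuccAbove (fun _ : Fin (N+1) => ℝ) (Fin.last N))
  have heq : (fun z : ℝ × (Fin N → ℝ) => (Fin.snoc z.2 z.1 : Fin (N+1) → ℝ)) =
      ⇑(MeasurableEquiv.piFinSuccAbove (fun _ : Fin (N+1) => ℝ) (Fin.last N)).symm := by
    funext z
    simp [MeasurableEquiv.piFinSuccAbove, Fin.insertNth_last', Fin.snocEquiv]
  rw [heq]
  exact h

lemma measurableEmbedding_snoc (N : ℕ) :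
    MeasurableEmbedding (fun z : ℝ × (Fin N → ℝ) => (Fin.snoc z.2 z.1 : Fin (N+1) → ℝ)) := by
  have heq : (fun z : ℝ × (Fin N → ℝ) => (Fin.snoc z.2 z.1 : Fin (N+1) → ℝ)) =
      ⇑(MeasurableEquiv.piFinSuccAbove (fun _ : Fin (N+1) => ℝ) (Fin.last N)).symm := by
    funext z
    simp [MeasurableEquiv.piFinSuccAbove, Fin.insertNth_last', Fin.snocEquiv]
  rw [heq]
  exact (MeasurableEquiv.piFinSuccAbove _ _).symm.measurableEmbedding

lemma monotone_snoc_iff {N : ℕ} {s : Fin N → ℝ} {τ : ℝ} :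
    Monotone (Fin.snoc s τ : Fin (N+1) → ℝ) ↔ Monotone s ∧ ∀ i, s i ≤ τ := by
  constructor
  · intro h
    constructor
    · intro a b hab
      have := h (Fin.castSucc_le_castSucc_iff.2 hab)
      simpa using this
    · intro i
      have := h (Fin.le_last (Fin.castSucc i))
      simpa using this
  · rintro ⟨hm, hb⟩ a b hab
    induction b using Fin.lastCases with
    | last =>
      induction a using Fin.lastCases with
      | last => simp
      | cast j => simp [hb j]
    | cast j =>
      induction a using Fin.lastCases with
      | last => exact absurd hab (Fin.castSucc_lt_last j).not_ge
      | cast i =>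
        simp only [Fin.snoc_castSucc]
        exact hm (Fin.castSucc_le_castSucc_iff.1 hab)

lemma snoc_mem_iffA {N : ℕ} {T τ : ℝ} {s : Fin N → ℝ} :
    (Fin.snoc s τ : Fin (N+1) → ℝ) ∈ ordSimplex (N+1) T ↔
      s ∈ ordSimplex N τ ∧ τ ∈ Set.Icc 0 T := by
  constructor
  · rintro ⟨hm, hb⟩
    have hτ : τ ∈ Set.Icc 0 T := by simpa using hb (Fin.last N)
    have h1 := monotone_snoc_iff.1 hm
    refine ⟨⟨h1.1, fun i => ?_⟩, hτ⟩
    refine ⟨?_, h1.2 i⟩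
    have := hb (Fin.castSucc i)
    simpa using this.1
  · rintro ⟨⟨hm, hb⟩, hτ⟩
    refine ⟨monotone_snoc_iff.2 ⟨hm, fun i => (hb i).2⟩, fun i => ?_⟩
    induction i using Fin.lastCases with
    | last => simpa using hτ
    | cast j =>
      simp only [Fin.snoc_castSucc]
      exact ⟨(hb j).1, le_trans (hb j).2 hτ.2⟩

/-- Lower bound for the last coordinate: `s (last K)` for `N = K+1`, `0` for `N = 0`. -/
noncomputable def lastVal {N : ℕ} (s : Fin N → ℝ) : ℝ := (Fin.cons (0:ℝ) s : Fin (N+1) → ℝ) (Fin.last N)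

lemma lastVal_zero (s : Fin 0 → ℝ) : lastVal s = 0 := by simp [lastVal]

lemma lastVal_succ {K : ℕ} (s : Fin (K+1) → ℝ) : lastVal s = s (Fin.last K) := by
  have h : Fin.last (K+1) = (Fin.last K).succ := by
    simp [Fin.succ_last]
  show (Fin.cons (0:ℝ) s : Fin (K+2) → ℝ) (Fin.last (K+1)) = _
  rw [h, Fin.cons_succ]

lemma mem_ordSimplex_zero (T : ℝ) (s : Fin 0 → ℝ) : s ∈ ordSimplex 0 T :=
  ⟨fun a _ _ => a.elim0, fun i => i.elim0⟩

lemma snoc_mem_iffB {N : ℕ} {T τ : ℝ} {s : Fin N → ℝ} :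
    (Fin.snoc s τ : Fin (N+1) → ℝ) ∈ ordSimplex (N+1) T ↔
      s ∈ ordSimplex N T ∧ τ ∈ Set.Icc (lastVal s) T := by
  cases N with
  | zero =>
    rw [snoc_mem_iffA, lastVal_zero]
    simp [mem_ordSimplex_zero T s, mem_ordSimplex_zero τ s]
  | succ K =>
    rw [snoc_mem_iffA, lastVal_succ]
    constructor
    · rintro ⟨⟨hm, hb⟩, hτ⟩
      exact ⟨⟨hm, fun i => ⟨(hb i).1, le_trans (hb i).2 hτ.2⟩⟩,
        ⟨(hb (Fin.last K)).2, hτ.2⟩⟩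
    · rintro ⟨⟨hm, hb⟩, hτ⟩
      refine ⟨⟨hm, fun i => ⟨(hb i).1, le_trans (hm (Fin.le_last i)) hτ.1⟩⟩,
        ⟨le_trans (hb (Fin.last K)).1 hτ.1, hτ.2⟩⟩

def sliceMap (N : ℕ) : ℝ × (Fin N → ℝ) → (Fin (N+1) → ℝ) := fun z => Fin.snoc z.2 z.1

lemma continuous_sliceMap (N : ℕ) : Continuous (sliceMap N) := by
  have h : sliceMap N = fun z : ℝ × (Fin N → ℝ) => snocL N (z.2, z.1) := by
    funext z; rw [snocL_apply]; rfl
  rw [h]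
  exact (snocL N).continuous.comp (continuous_snd.prodMk continuous_fst)

lemma isCompact_slicePre (N : ℕ) (T : ℝ) :
    IsCompact (sliceMap N ⁻¹' ordSimplex (N+1) T) := by
  have hK : IsCompact ((Set.Icc (0:ℝ) T) ×ˢ (Set.pi Set.univ fun _ : Fin N => Set.Icc (0:ℝ) T)) :=
    isCompact_Icc.prod (isCompact_univ_pi fun _ => isCompact_Icc)
  refine IsCompact.of_isClosed_subset hK
    ((isClosed_ordSimplex (N+1) T).preimage (continuous_sliceMap N)) ?_
  rintro ⟨τ, s⟩ hz
  have h := snoc_mem_iffA.1 hz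
  exact ⟨h.2, fun i _ => ⟨(h.1.2 i).1, le_trans (h.1.2 i).2 h.2.2⟩⟩

lemma measurableSet_slicePre (N : ℕ) (T : ℝ) :
    MeasurableSet (sliceMap N ⁻¹' ordSimplex (N+1) T) :=
  (isCompact_slicePre N T).isClosed.measurableSet

lemma integrable_sliceInd (N : ℕ) (T : ℝ) (f : (Fin (N+1) → ℝ) → ℝ) (hf : Continuous f) :
    Integrable ((sliceMap N ⁻¹' ordSimplex (N+1) T).indicator (fun z => f (sliceMap N z)))
      (volume.prod volume) := by
  rw [← Measure.volume_eq_prod,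
    integrable_indicator_iff (measurableSet_slicePre N T)]
  exact ((hf.comp (continuous_sliceMap N)).continuousOn).integrableOn_compact
    (isCompact_slicePre N T)

lemma slice_inner_A (N : ℕ) (T : ℝ) (f : (Fin (N+1) → ℝ) → ℝ) (τ : ℝ) :
    (∫ s : Fin N → ℝ, (sliceMap N ⁻¹' ordSimplex (N+1) T).indicator
        (fun z => f (sliceMap N z)) (τ, s))
      = (Set.Icc (0:ℝ) T).indicator (fun τ => ∫ s in ordSimplex N τ, f (Fin.snoc s τ)) τ := by
  by_cases hτ : τ ∈ Set.Icc (0:ℝ) T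
  · rw [Set.indicator_of_mem hτ]
    have h : (fun s : Fin N → ℝ => (sliceMap N ⁻¹' ordSimplex (N+1) T).indicator
        (fun z => f (sliceMap N z)) (τ, s))
        = (ordSimplex N τ).indicator (fun s => f (Fin.snoc s τ)) := by
      funext s
      by_cases hs : s ∈ ordSimplex N τ
      · rw [Set.indicator_of_mem hs,
          Set.indicator_of_mem (show (τ, s) ∈ sliceMap N ⁻¹' ordSimplex (N+1) T from
            snoc_mem_iffA.2 ⟨hs, hτ⟩)]
        rfl
      · rw [Set.indicator_of_notMem hs, Set.indicator_of_notMem]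
        exact fun h' => hs (snoc_mem_iffA.1 h').1
    rw [h, integral_indicator (measurableSet_ordSimplex N τ)]
  · rw [Set.indicator_of_notMem hτ]
    have h : (fun s : Fin N → ℝ => (sliceMap N ⁻¹' ordSimplex (N+1) T).indicator
        (fun z => f (sliceMap N z)) (τ, s)) = fun _ => 0 := by
      funext s
      exact Set.indicator_of_notMem (fun h' => hτ (snoc_mem_iffA.1 h').2) _
    rw [h, integral_zero]

lemma slice_inner_B (N : ℕ) (T : ℝ) (f : (Fin (N+1) → ℝ) → ℝ) (s : Fin N → ℝ) :
    (∫ τ : ℝ, (sliceMap N ⁻¹' ordSimplex (N+1) T).indicator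
        (fun z => f (sliceMap N z)) (τ, s))
      = (ordSimplex N T).indicator
          (fun s => ∫ τ in Set.Icc (lastVal s) T, f (Fin.snoc s τ)) s := by
  by_cases hs : s ∈ ordSimplex N T
  · rw [Set.indicator_of_mem hs]
    have h : (fun τ : ℝ => (sliceMap N ⁻¹' ordSimplex (N+1) T).indicator
        (fun z => f (sliceMap N z)) (τ, s))
        = (Set.Icc (lastVal s) T).indicator (fun τ => f (Fin.snoc s τ)) := by
      funext τ
      by_cases hτ : τ ∈ Set.Icc (lastVal s) T
      · rw [Set.indicator_of_mem hτ,
          Set.indicator_of_mem (show (τ, s) ∈ sliceMap N ⁻¹' ordSimplex (N+1) T from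
            snoc_mem_iffB.2 ⟨hs, hτ⟩)]
        rfl
      · rw [Set.indicator_of_notMem hτ, Set.indicator_of_notMem]
        exact fun h' => hτ (snoc_mem_iffB.1 h').2
    rw [h, integral_indicator measurableSet_Icc]
  · rw [Set.indicator_of_notMem hs]
    have h : (fun τ : ℝ => (sliceMap N ⁻¹' ordSimplex (N+1) T).indicator
        (fun z => f (sliceMap N z)) (τ, s)) = fun _ => 0 := by
      funext τ
      exact Set.indicator_of_notMem (fun h' => hs (snoc_mem_iffB.1 h').1) _
    rw [h, integral_zero]

lemma slice_start (N : ℕ) (T : ℝ) (f : (Fin (N+1) → ℝ) → ℝ) :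
    ∫ t in ordSimplex (N+1) T, f t
      = ∫ z : ℝ × (Fin N → ℝ), (sliceMap N ⁻¹' ordSimplex (N+1) T).indicator
          (fun z => f (sliceMap N z)) z ∂(volume.prod volume) := by
  rw [← Measure.volume_eq_prod, integral_indicator (measurableSet_slicePre N T)]
  exact ((measurePreserving_snoc N).setIntegral_preimage_emb (measurableEmbedding_snoc N)
    f (ordSimplex (N+1) T)).symm

lemma sliceA (N : ℕ) (T : ℝ) (f : (Fin (N+1) → ℝ) → ℝ) (hf : Continuous f) :
    ∫ t in ordSimplex (N+1) T, f t
      = ∫ τ in Set.Icc (0:ℝ) T, (∫ s in ordSimplex N τ, f (Fin.snoc s τ)) := by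
  rw [slice_start N T f, integral_prod _ (integrable_sliceInd N T f hf),
    ← integral_indicator measurableSet_Icc]
  exact integral_congr_ae (Filter.Eventually.of_forall fun τ => slice_inner_A N T f τ)

lemma sliceB (N : ℕ) (T : ℝ) (f : (Fin (N+1) → ℝ) → ℝ) (hf : Continuous f) :
    ∫ t in ordSimplex (N+1) T, f t
      = ∫ s in ordSimplex N T, (∫ τ in Set.Icc (lastVal s) T, f (Fin.snoc s τ)) := by
  rw [slice_start N T f, integral_prod_symm _ (integrable_sliceInd N T f hf),
    ← integral_indicator (measurableSet_ordSimplex N T)]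
  exact integral_congr_ae (Filter.Eventually.of_forall fun s => slice_inner_B N T f s)

lemma sliceB_integrable (N : ℕ) (T : ℝ) (f : (Fin (N+1) → ℝ) → ℝ) (hf : Continuous f) :
    IntegrableOn (fun s => ∫ τ in Set.Icc (lastVal s) T, f (Fin.snoc s τ))
      (ordSimplex N T) := by
  have h := (integrable_sliceInd N T f hf).integral_prod_right
  have hfun : (fun s : Fin N → ℝ => ∫ τ : ℝ, (sliceMap N ⁻¹' ordSimplex (N+1) T).indicator
      (fun z => f (sliceMap N z)) (τ, s))
      = (ordSimplex N T).indicator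
          (fun s => ∫ τ in Set.Icc (lastVal s) T, f (Fin.snoc s τ)) := by
    funext s; exact slice_inner_B N T f s
  rw [hfun] at h
  exact (integrable_indicator_iff (measurableSet_ordSimplex N T)).1 h

lemma snoc_zero_one (N : ℕ) :
    (Fin.snoc (0 : Fin N → ℝ) (1:ℝ) : Fin (N+1) → ℝ) = Pi.single (Fin.last N) 1 := by
  funext i
  induction i using Fin.lastCases with
  | last => simp
  | cast j => simp [Pi.single_eq_of_ne (Fin.castSucc_lt_last j).ne]

lemma snoc_single (N : ℕ) (n : Fin N) :
    (Fin.snoc (Pi.single n 1 : Fin N → ℝ) (0:ℝ) : Fin (N+1) → ℝ)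
      = Pi.single (Fin.castSucc n) 1 := by
  funext i
  induction i using Fin.lastCases with
  | last => simp [Pi.single_eq_of_ne (Fin.castSucc_lt_last n).ne']
  | cast j =>
    by_cases h : j = n
    · subst h; simp
    · simp [Pi.single_eq_of_ne h,
        Pi.single_eq_of_ne (fun hc => h (Fin.castSucc_injective _ hc))]

lemma hasDerivAt_snoc {N : ℕ} {p : (Fin (N+1) → ℝ) → ℝ} (hp : ContDiff ℝ 1 p)
    (s : Fin N → ℝ) (τ : ℝ) :
    HasDerivAt (fun τ => p (Fin.snoc s τ))
      (fderiv ℝ p (Fin.snoc s τ) (Pi.single (Fin.last N) 1)) τ := by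
  have h1 : HasDerivAt (fun τ : ℝ => ((s, τ) : (Fin N → ℝ) × ℝ)) ((0 : Fin N → ℝ), (1:ℝ)) τ :=
    (hasDerivAt_const τ s).prodMk (hasDerivAt_id τ)
  have h2 := (snocL N).hasFDerivAt.comp_hasDerivAt τ h1
  have he : (⇑(snocL N) ∘ fun τ : ℝ => (s, τ)) = fun τ => (Fin.snoc s τ : Fin (N+1) → ℝ) := by
    funext τ; simp [Function.comp, snocL_apply]
  rw [he, snocL_apply, snoc_zero_one] at h2
  have h3 := ((hp.differentiable one_ne_zero) (Fin.snoc s τ)).hasFDerivAt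
  exact h3.comp_hasDerivAt τ h2

lemma fderiv_snoc_single {N : ℕ} {p : (Fin (N+1) → ℝ) → ℝ} (hp : ContDiff ℝ 1 p)
    (τ : ℝ) (s : Fin N → ℝ) (n : Fin N) :
    fderiv ℝ (fun v => p (Fin.snoc v τ)) s (Pi.single n 1)
      = fderiv ℝ p (Fin.snoc s τ) (Pi.single (Fin.castSucc n) 1) := by
  have h1 : HasFDerivAt (fun v : Fin N → ℝ => ((v, τ) : (Fin N → ℝ) × ℝ))
      ((ContinuousLinearMap.id ℝ (Fin N → ℝ)).prod 0) s :=
    (hasFDerivAt_id s).prodMk (hasFDerivAt_const τ s)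
  have h2 := (snocL N).hasFDerivAt.comp s h1
  have h3 := (((hp.differentiable one_ne_zero) (snocL N (s, τ))).hasFDerivAt).comp s h2
  have he : (p ∘ ⇑(snocL N) ∘ fun v : Fin N → ℝ => (v, τ)) = fun v => p (Fin.snoc v τ) := by
    funext v; simp [Function.comp, snocL_apply]
  rw [snocL_apply] at h3
  rw [he] at h3
  rw [h3.fderiv]
  simp only [ContinuousLinearMap.comp_apply, ContinuousLinearMap.prod_apply,
    ContinuousLinearMap.id_apply, ContinuousLinearMap.zero_apply, snocL_apply,
    snoc_single]

lemma contDiff_comp_snoc {N : ℕ} {p : (Fin (N+1) → ℝ) → ℝ} (hp : ContDiff ℝ 1 p) (τ : ℝ) :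
    ContDiff ℝ 1 (fun v : Fin N → ℝ => p (Fin.snoc v τ)) := by
  have h : (fun v : Fin N → ℝ => p (Fin.snoc v τ)) =
      p ∘ (fun v : Fin N → ℝ => snocL N (v, τ)) := by
    funext v; simp [Function.comp, snocL_apply]
  rw [h]
  exact hp.comp ((snocL N).contDiff.comp (contDiff_id.prodMk contDiff_const))

lemma continuous_snoc_right (N : ℕ) (τ : ℝ) :
    Continuous fun s : Fin N → ℝ => (Fin.snoc s τ : Fin (N+1) → ℝ) :=
  (continuous_sliceMap N).comp (continuous_const.prodMk continuous_id)

lemma continuous_lastVal (N : ℕ) : Continuous (lastVal : (Fin N → ℝ) → ℝ) := by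
  cases N with
  | zero =>
    have h : (lastVal : (Fin 0 → ℝ) → ℝ) = fun _ => 0 := funext lastVal_zero
    rw [h]; exact continuous_const
  | succ K =>
    have h : (lastVal : (Fin (K+1) → ℝ) → ℝ) = fun s => s (Fin.last K) := funext lastVal_succ
    rw [h]; exact continuous_apply _

lemma lastVal_mem {N : ℕ} {T : ℝ} (hT : 0 ≤ T) {s : Fin N → ℝ} (hs : s ∈ ordSimplex N T) :
    lastVal s ∈ Set.Icc (0:ℝ) T := by
  cases N with
  | zero => rw [lastVal_zero]; exact ⟨le_refl _, hT⟩
  | succ K => rw [lastVal_succ]; exact hs.2 (Fin.last K)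

lemma continuous_snoc_left (N : ℕ) (s : Fin N → ℝ) :
    Continuous fun τ : ℝ => (Fin.snoc s τ : Fin (N+1) → ℝ) :=
  (continuous_sliceMap N).comp (continuous_id.prodMk continuous_const)

lemma lastTerm (N : ℕ) (T : ℝ) (hT : 0 ≤ T) (p : (Fin (N+1) → ℝ) → ℝ) (hp : ContDiff ℝ 1 p)
    (g : ℝ → ℝ) (hg : ContDiff ℝ 1 g) :
    ∫ t in ordSimplex (N+1) T, fderiv ℝ p t (Pi.single (Fin.last N) 1) * g (t (Fin.last N))
      = g T * (∫ s in ordSimplex N T, p (Fin.snoc s T))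
        - (∫ s in ordSimplex N T, p (Fin.snoc s (lastVal s)) * g (lastVal s))
        - ∫ t in ordSimplex (N+1) T, p t * deriv g (t (Fin.last N)) := by
  set f1 : (Fin (N+1) → ℝ) → ℝ :=
    fun t => fderiv ℝ p t (Pi.single (Fin.last N) 1) * g (t (Fin.last N)) with hf1def
  have hf1 : Continuous f1 :=
    ((hp.continuous_fderiv one_ne_zero).clm_apply continuous_const).mul
      (hg.continuous.comp (continuous_apply _))
  set f2 : (Fin (N+1) → ℝ) → ℝ := fun t => p t * deriv g (t (Fin.last N)) with hf2def
  have hf2 : Continuous f2 :=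
    hp.continuous.mul ((hg.continuous_deriv le_rfl).comp (continuous_apply _))
  rw [sliceB N T f1 hf1, sliceB N T f2 hf2]
  have key : ∀ s ∈ ordSimplex N T,
      (∫ τ in Set.Icc (lastVal s) T, f1 (Fin.snoc s τ))
        = g T * p (Fin.snoc s T) - p (Fin.snoc s (lastVal s)) * g (lastVal s)
          - ∫ τ in Set.Icc (lastVal s) T, f2 (Fin.snoc s τ) := by
    intro s hs
    have hle : lastVal s ≤ T := (lastVal_mem hT hs).2
    have hIcc1 : (∫ τ in Set.Icc (lastVal s) T, f1 (Fin.snoc s τ))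
        = ∫ τ in (lastVal s)..T, f1 (Fin.snoc s τ) := by
      rw [integral_Icc_eq_integral_Ioc, intervalIntegral.integral_of_le hle]
    have hIcc2 : (∫ τ in Set.Icc (lastVal s) T, f2 (Fin.snoc s τ))
        = ∫ τ in (lastVal s)..T, f2 (Fin.snoc s τ) := by
      rw [integral_Icc_eq_integral_Ioc, intervalIntegral.integral_of_le hle]
    rw [hIcc1, hIcc2]
    have e1 : (fun τ => f1 (Fin.snoc s τ))
        = fun τ => g τ * fderiv ℝ p (Fin.snoc s τ) (Pi.single (Fin.last N) 1) := by
      funext τ; simp only [hf1def, Fin.snoc_last]; ring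
    have e2 : (fun τ => f2 (Fin.snoc s τ)) = fun τ => deriv g τ * p (Fin.snoc s τ) := by
      funext τ; simp only [hf2def, Fin.snoc_last]; ring
    rw [e1, e2]
    have hv' : Continuous fun τ : ℝ => fderiv ℝ p (Fin.snoc s τ) (Pi.single (Fin.last N) 1) :=
      ((hp.continuous_fderiv one_ne_zero).comp (continuous_snoc_left N s)).clm_apply
        continuous_const
    have hibp := intervalIntegral.integral_mul_deriv_eq_deriv_mul
      (a := lastVal s) (b := T) (u := g) (u' := deriv g) (v := fun τ => p (Fin.snoc s τ))
      (v' := fun τ => fderiv ℝ p (Fin.snoc s τ) (Pi.single (Fin.last N) 1))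
      (fun x _ => ((hg.differentiable one_ne_zero) x).hasDerivAt)
      (fun x _ => hasDerivAt_snoc hp s x)
      ((hg.continuous_deriv le_rfl).intervalIntegrable _ _)
      (hv'.intervalIntegrable _ _)
    rw [hibp]
    ring
  rw [setIntegral_congr_fun (measurableSet_ordSimplex N T) key]
  have hA : IntegrableOn (fun s => g T * p (Fin.snoc s T)) (ordSimplex N T) :=
    (continuous_const.mul (hp.continuous.comp (continuous_snoc_right N T))).continuousOn.integrableOn_compact
      (isCompact_ordSimplex N T)
  have hB : IntegrableOn (fun s => p (Fin.snoc s (lastVal s)) * g (lastVal s))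
      (ordSimplex N T) := by
    have hc : Continuous fun s : Fin N → ℝ => (Fin.snoc s (lastVal s) : Fin (N+1) → ℝ) :=
      (continuous_sliceMap N).comp ((continuous_lastVal N).prodMk continuous_id)
    exact ((hp.continuous.comp hc).mul
      (hg.continuous.comp (continuous_lastVal N))).continuousOn.integrableOn_compact
      (isCompact_ordSimplex N T)
  have hC : IntegrableOn (fun s => ∫ τ in Set.Icc (lastVal s) T, f2 (Fin.snoc s τ))
      (ordSimplex N T) := sliceB_integrable N T f2 hf2
  rw [integral_sub (f := fun s : Fin N → ℝ =>
        g T * p (Fin.snoc s T) - p (Fin.snoc s (lastVal s)) * g (lastVal s))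
      (g := fun s : Fin N → ℝ => ∫ τ in Set.Icc (lastVal s) T, f2 (Fin.snoc s τ))
      (hA.sub hB) hC,
    integral_sub hA hB, integral_const_mul]

lemma sliceA_integrable (N : ℕ) (T : ℝ) (f : (Fin (N+1) → ℝ) → ℝ) (hf : Continuous f) :
    IntegrableOn (fun τ => ∫ s in ordSimplex N τ, f (Fin.snoc s τ)) (Set.Icc (0:ℝ) T) := by
  have h := (integrable_sliceInd N T f hf).integral_prod_left
  have hfun : (fun τ : ℝ => ∫ s : Fin N → ℝ, (sliceMap N ⁻¹' ordSimplex (N+1) T).indicator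
      (fun z => f (sliceMap N z)) (τ, s))
      = (Set.Icc (0:ℝ) T).indicator (fun τ => ∫ s in ordSimplex N τ, f (Fin.snoc s τ)) :=
    funext (slice_inner_A N T f)
  rw [hfun] at h
  exact (integrable_indicator_iff measurableSet_Icc).1 h

lemma contIntegrableOn {n : ℕ} (T : ℝ) (f : (Fin n → ℝ) → ℝ) (hf : Continuous f) :
    IntegrableOn f (ordSimplex n T) :=
  hf.continuousOn.integrableOn_compact (isCompact_ordSimplex n T)

lemma continuous_cons_zero (N : ℕ) :
    Continuous fun s : Fin N → ℝ => (Fin.cons (0:ℝ) s : Fin (N+1) → ℝ) := by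
  refine continuous_pi fun i => ?_
  induction i using Fin.cases with
  | zero => simpa using continuous_const
  | succ j => simpa using continuous_apply j

lemma cons_snoc_comm (K : ℕ) (r : Fin K → ℝ) (τ : ℝ) :
    (Fin.cons (0:ℝ) (Fin.snoc r τ) : Fin (K+2) → ℝ)
      = Fin.snoc (Fin.cons (0:ℝ) r) τ := by
  funext i
  induction i using Fin.lastCases with
  | last =>
    have h : Fin.last (K+1) = (Fin.last K).succ := by simp [Fin.succ_last]
    rw [Fin.snoc_last, h, Fin.cons_succ, Fin.snoc_last]
  | cast j =>
    rw [Fin.snoc_castSucc]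
    induction j using Fin.cases with
    | zero => simp
    | succ i =>
      rw [Fin.cons_succ, ← Fin.succ_castSucc, Fin.cons_succ, Fin.snoc_castSucc]

theorem aux (M : ℕ) : ∀ (T : ℝ), 0 ≤ T → ∀ (p : (Fin (M + 1) → ℝ) → ℝ), ContDiff ℝ 1 p →
    ∀ (g : ℝ → ℝ), ContDiff ℝ 1 g →
    ∑ n : Fin (M + 1), ∫ t in ordSimplex (M + 1) T,
        fderiv ℝ p t (Pi.single n 1) * g (t n)
    = g T * (∫ s in ordSimplex M T, p (Fin.snoc s T))
      - g 0 * (∫ s in ordSimplex M T, p (Fin.cons 0 s))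
      - ∫ t in ordSimplex (M + 1) T, p t * ∑ n : Fin (M + 1), deriv g (t n) := by
  induction M with
  | zero =>
    intro T hT p hp g hg
    have h := lastTerm 0 T hT p hp g hg
    have e1 : (fun s : Fin 0 → ℝ => p (Fin.snoc s (lastVal s)) * g (lastVal s))
        = fun s : Fin 0 → ℝ => g 0 * p (Fin.cons 0 s) := by
      funext s
      have h2 : (Fin.snoc s (lastVal s) : Fin 1 → ℝ) = Fin.cons 0 s := by
        funext i
        obtain rfl : i = (0 : Fin 1) := Fin.fin_one_eq_zero i
        rw [show (0 : Fin 1) = Fin.last 0 from rfl, Fin.snoc_last, lastVal_zero]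
        rw [show (Fin.last 0 : Fin 1) = 0 from rfl, Fin.cons_zero]
      rw [h2, lastVal_zero]; ring
    rw [e1, integral_const_mul] at h
    rw [show (Fin.last 0 : Fin 1) = 0 from rfl] at h
    simpa [Fin.sum_univ_one] using h
  | succ K ih =>
    intro T hT p hp g hg
    have hpf := hp.continuous_fderiv one_ne_zero
    have hgd := hg.continuous_deriv le_rfl
    have hq1c : Continuous fun s : Fin (K+1) → ℝ =>
        p (Fin.snoc s (lastVal s)) * g (lastVal s) := by
      have hc : Continuous fun s : Fin (K+1) → ℝ =>
          (Fin.snoc s (lastVal s) : Fin (K+2) → ℝ) :=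
        (continuous_sliceMap (K+1)).comp ((continuous_lastVal (K+1)).prodMk continuous_id)
      exact (hp.continuous.comp hc).mul (hg.continuous.comp (continuous_lastVal (K+1)))
    have hq2c : Continuous fun s : Fin (K+1) → ℝ => p (Fin.cons 0 s) :=
      hp.continuous.comp (continuous_cons_zero (K+1))
    have hq3c : Continuous fun t : Fin (K+2) → ℝ =>
        p t * ∑ n : Fin (K+1), deriv g (t (Fin.castSucc n)) :=
      hp.continuous.mul (continuous_finset_sum _ fun n _ => hgd.comp (continuous_apply _))
    have hFc : Continuous fun t : Fin (K+2) → ℝ =>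
        ∑ n : Fin (K+1), fderiv ℝ p t (Pi.single (Fin.castSucc n) 1) * g (t (Fin.castSucc n)) :=
      continuous_finset_sum _ fun n _ =>
        (hpf.clm_apply continuous_const).mul (hg.continuous.comp (continuous_apply _))
    rw [Fin.sum_univ_castSucc]
    rw [lastTerm (K+1) T hT p hp g hg]
    have hswap : ∑ n : Fin (K+1), ∫ t in ordSimplex (K+2) T,
          fderiv ℝ p t (Pi.single (Fin.castSucc n) 1) * g (t (Fin.castSucc n))
        = ∫ t in ordSimplex (K+2) T,
            ∑ n : Fin (K+1), fderiv ℝ p t (Pi.single (Fin.castSucc n) 1) * g (t (Fin.castSucc n)) :=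
      (integral_finset_sum Finset.univ fun n _ => contIntegrableOn T _
        ((hpf.clm_apply continuous_const).mul (hg.continuous.comp (continuous_apply _)))).symm
    rw [hswap, sliceA (K+1) T _ hFc]
    have hkey : ∀ τ ∈ Set.Icc (0:ℝ) T,
        (∫ s in ordSimplex (K+1) τ, ∑ n : Fin (K+1),
            fderiv ℝ p (Fin.snoc s τ) (Pi.single (Fin.castSucc n) 1) * g ((Fin.snoc s τ : Fin (K+2) → ℝ) (Fin.castSucc n)))
          = (∫ r in ordSimplex K τ,
                p (Fin.snoc (Fin.snoc r τ) (lastVal (Fin.snoc r τ))) * g (lastVal (Fin.snoc r τ)))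
            - g 0 * (∫ r in ordSimplex K τ, p (Fin.cons 0 (Fin.snoc r τ)))
            - (∫ s in ordSimplex (K+1) τ,
                p (Fin.snoc s τ) * ∑ n : Fin (K+1), deriv g ((Fin.snoc s τ : Fin (K+2) → ℝ) (Fin.castSucc n))) := by
      intro τ hτ
      have hpτ : ContDiff ℝ 1 fun v : Fin (K+1) → ℝ => p (Fin.snoc v τ) :=
        contDiff_comp_snoc hp τ
      have hIH := ih τ hτ.1 _ hpτ g hg
      have hl : (∫ s in ordSimplex (K+1) τ, ∑ n : Fin (K+1),
            fderiv ℝ p (Fin.snoc s τ) (Pi.single (Fin.castSucc n) 1) * g ((Fin.snoc s τ : Fin (K+2) → ℝ) (Fin.castSucc n)))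
          = ∑ n : Fin (K+1), ∫ t in ordSimplex (K+1) τ,
              fderiv ℝ (fun v => p (Fin.snoc v τ)) t (Pi.single n 1) * g (t n) := by
        rw [setIntegral_congr_fun (measurableSet_ordSimplex (K+1) τ)
          (show Set.EqOn
            (fun s : Fin (K+1) → ℝ => ∑ n : Fin (K+1),
              fderiv ℝ p (Fin.snoc s τ) (Pi.single (Fin.castSucc n) 1) * g ((Fin.snoc s τ : Fin (K+2) → ℝ) (Fin.castSucc n)))
            (fun s : Fin (K+1) → ℝ => ∑ n : Fin (K+1),
              fderiv ℝ (fun v => p (Fin.snoc v τ)) s (Pi.single n 1) * g (s n))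
            (ordSimplex (K+1) τ) from fun s _ => by
              refine Finset.sum_congr rfl fun n _ => ?_
              rw [fderiv_snoc_single hp, Fin.snoc_castSucc])]
        exact integral_finset_sum Finset.univ fun n _ => contIntegrableOn τ _
          (((hpτ.continuous_fderiv one_ne_zero).clm_apply continuous_const).mul
            (hg.continuous.comp (continuous_apply _)))
      rw [hl, hIH]
      have e1 : (∫ r in ordSimplex K τ,
            p (Fin.snoc (Fin.snoc r τ) (lastVal (Fin.snoc r τ))) * g (lastVal (Fin.snoc r τ)))
          = g τ * ∫ s in ordSimplex K τ, p (Fin.snoc (Fin.snoc s τ) τ) := by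
        simp only [lastVal_succ, Fin.snoc_last]
        rw [integral_mul_const, mul_comm]
      have e2 : (∫ r in ordSimplex K τ, p (Fin.cons 0 (Fin.snoc r τ)))
          = ∫ s in ordSimplex K τ, p (Fin.snoc (Fin.cons 0 s) τ) := by
        simp only [cons_snoc_comm]
      have e3 : (∫ s in ordSimplex (K+1) τ,
            p (Fin.snoc s τ) * ∑ n : Fin (K+1), deriv g ((Fin.snoc s τ : Fin (K+2) → ℝ) (Fin.castSucc n)))
          = ∫ t in ordSimplex (K+1) τ, p (Fin.snoc t τ) * ∑ n : Fin (K+1), deriv g (t n) := by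
        simp only [Fin.snoc_castSucc]
      rw [e1, e2, e3]
    have hstep : (∫ τ in Set.Icc (0:ℝ) T, ∫ s in ordSimplex (K+1) τ,
          ∑ n : Fin (K+1),
            fderiv ℝ p (Fin.snoc s τ) (Pi.single (Fin.castSucc n) 1) * g ((Fin.snoc s τ : Fin (K+2) → ℝ) (Fin.castSucc n)))
        = ∫ τ in Set.Icc (0:ℝ) T,
            ((∫ r in ordSimplex K τ,
                p (Fin.snoc (Fin.snoc r τ) (lastVal (Fin.snoc r τ))) * g (lastVal (Fin.snoc r τ)))
              - g 0 * (∫ r in ordSimplex K τ, p (Fin.cons 0 (Fin.snoc r τ)))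
              - (∫ s in ordSimplex (K+1) τ,
                  p (Fin.snoc s τ) * ∑ n : Fin (K+1), deriv g ((Fin.snoc s τ : Fin (K+2) → ℝ) (Fin.castSucc n)))) :=
      setIntegral_congr_fun measurableSet_Icc fun τ hτ => hkey τ hτ
    rw [hstep]
    have hG1 := sliceA_integrable K T
      (fun s => p (Fin.snoc s (lastVal s)) * g (lastVal s)) hq1c
    have hG2 := sliceA_integrable K T (fun s => p (Fin.cons 0 s)) hq2c
    have hG3 := sliceA_integrable (K+1) T
      (fun t => p t * ∑ n : Fin (K+1), deriv g (t (Fin.castSucc n))) hq3c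
    rw [integral_sub
        (f := fun τ => (∫ r in ordSimplex K τ,
            p (Fin.snoc (Fin.snoc r τ) (lastVal (Fin.snoc r τ))) * g (lastVal (Fin.snoc r τ)))
          - g 0 * (∫ r in ordSimplex K τ, p (Fin.cons 0 (Fin.snoc r τ))))
        (g := fun τ => ∫ s in ordSimplex (K+1) τ,
            p (Fin.snoc s τ) * ∑ n : Fin (K+1), deriv g ((Fin.snoc s τ : Fin (K+2) → ℝ) (Fin.castSucc n)))
        (hG1.sub (hG2.const_mul _)) hG3,
      integral_sub hG1 (hG2.const_mul _), integral_const_mul]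
    rw [← sliceA K T _ hq1c, ← sliceA K T _ hq2c, ← sliceA (K+1) T _ hq3c]
    have hcomb : (∫ t in ordSimplex (K+2) T, p t * ∑ n : Fin (K+2), deriv g (t n))
        = (∫ t in ordSimplex (K+2) T, p t * ∑ n : Fin (K+1), deriv g (t (Fin.castSucc n)))
          + ∫ t in ordSimplex (K+2) T, p t * deriv g (t (Fin.last (K+1))) := by
      rw [← integral_add
        (f := fun t : Fin (K+2) → ℝ => p t * ∑ n : Fin (K+1), deriv g (t (Fin.castSucc n)))
        (g := fun t : Fin (K+2) → ℝ => p t * deriv g (t (Fin.last (K+1))))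
        (contIntegrableOn T _ hq3c)
        (contIntegrableOn T _ (hp.continuous.mul (hgd.comp (continuous_apply (Fin.last (K+1))))))]
      refine setIntegral_congr_fun (measurableSet_ordSimplex _ _) fun t _ => ?_
      rw [Fin.sum_univ_castSucc]; ring
    rw [hcomb]
    ring

end Stmt6

/-- coordinatewise integration by parts over the ordered simplex for an
integrand whose `n`-th score factor `g (t n)` depends only on the `n`-th coordinate:
all interior facet boundary terms cancel telescopically, leaving only the facets
`{t 1 = 0}` and `{t N = T}`.  Here `N = M + 1 ≥ 1`; for `N = 1` the integrals over
`ordSimplex 0 T` (the one-point space `ℝ^0` with unit measure) are `p T` and `p 0`. -/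
theorem stmt_6 (M : ℕ) (T : ℝ) (hT : 0 < T)
    (p : (Fin (M + 1) → ℝ) → ℝ) (hp : ContDiff ℝ 1 p)
    (g : ℝ → ℝ) (hg : ContDiff ℝ 1 g) :
    ∑ n : Fin (M + 1), ∫ t in ordSimplex (M + 1) T,
        fderiv ℝ p t (Pi.single n 1) * g (t n)
    = g T * (∫ s in ordSimplex M T, p (Fin.snoc s T))
      - g 0 * (∫ s in ordSimplex M T, p (Fin.cons 0 s))
      - ∫ t in ordSimplex (M + 1) T, p t * ∑ n : Fin (M + 1), deriv g (t n) := by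
  exact Stmt6.aux M T hT.le p hp g hg
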